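/- Fix a norm ‖·‖ on ℝ^d and on ℝ^p. Let S be a finite Borel measure on S^{d-1}_+ with σ_j := ∫ a_j S(da) > 0 for all j = 1,…,d, let μ be a probability measure on [0,∞)^d satisfying μ({x : x ≤ z componentwise}) = exp(−∫_{S^{d-1}_+} max_{i=1,…,d} (a_i/z_i) S(da)) for all z ∈ (0,∞)^d, and let H ∈ [0,∞)^{p×d}. Define the measure S̃ on the Borel sets of S^{p-1}_+ by S̃(A) := ∫_{{a ∈ S^{d-1}_+ : ‖H⋄a‖ > 0}} 1_A( (H⋄a)/‖H⋄a‖ ) · ‖H⋄a‖ S(da). Then S̃ is a finite Borel measure on S^{p-1}_+, and the pushforward measure ν of μ under the map x ↦ H ⋄ x satisfies ν({y : y ≤ z componentwise}) = exp(−∫_{S^{p-1}_+} max_{i=1,…,p} (a_i/z_i) S̃(da)) for all z ∈ (0,∞)^p. -/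

import Mathlib

set_option linter.unusedSectionVars false
set_option maxHeartbeats 1000000


open MeasureTheory
open scoped NNReal ENNReal

/-- Max-linear action of a nonnegative matrix on a vector:
`(H ⋄ x) i = max_l H i l * x l`. -/
noncomputable def maxVec {p d : ℕ} (H : Fin p → Fin d → ℝ) (x : Fin d → ℝ) : Fin p → ℝ :=
  fun i => ⨆ l, H i l * x l

/-- The transformed spectral measure
`S̃(A) := ∫_{‖H⋄a‖ > 0} 1_A((H⋄a)/‖H⋄a‖) ‖H⋄a‖ S(da)`,
formalized as the pushforward under the normalization map of the measure `S`
restricted to `{‖H⋄a‖ > 0}` and weighted by the density `‖H⋄a‖`. -/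
noncomputable def transformedSpectralMeasure {d p : ℕ}
    (N' : (Fin p → ℝ) → ℝ) (S : Measure (Fin d → ℝ)) (H : Fin p → Fin d → ℝ) :
    Measure (Fin p → ℝ) :=
  Measure.map (fun a => (N' (maxVec H a))⁻¹ • maxVec H a)
    ((S.restrict {a | 0 < N' (maxVec H a)}).withDensity
      fun a => ENNReal.ofReal (N' (maxVec H a)))

section SupHelpers
variable {ι : Type*} [Fintype ι] [Nonempty ι]

lemma fin_ciSup_le_iff (f : ι → ℝ) (a : ℝ) : (⨆ i, f i) ≤ a ↔ ∀ i, f i ≤ a := by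
  rw [← Finset.sup'_univ_eq_ciSup]
  simp [Finset.sup'_le_iff]

lemma fin_le_ciSup (f : ι → ℝ) (i : ι) : f i ≤ ⨆ j, f j :=
  le_ciSup (Set.finite_range f).bddAbove i

lemma fin_ciSup_nonneg (f : ι → ℝ) (h : ∀ i, 0 ≤ f i) : 0 ≤ ⨆ i, f i :=
  le_trans (h (Classical.arbitrary ι)) (fin_le_ciSup f _)

lemma contSup : Continuous (fun v : ι → ℝ => ⨆ i, v i) := by
  have : (fun v : ι → ℝ => ⨆ i, v i)
      = fun v => Finset.univ.sup' Finset.univ_nonempty (fun i => v i) := by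
    funext v; rw [Finset.sup'_univ_eq_ciSup]
  rw [this]
  exact Continuous.finset_sup'_apply Finset.univ_nonempty (fun i _ => continuous_apply i)

lemma fin_ciSup_comm {κ : Type*} [Fintype κ] [Nonempty κ] (f : ι → κ → ℝ) :
    ⨆ i, ⨆ j, f i j = ⨆ j, ⨆ i, f i j := by
  apply le_antisymm
  · exact (fin_ciSup_le_iff _ _).2 fun i => (fin_ciSup_le_iff _ _).2 fun j =>
      le_trans (fin_le_ciSup (fun i => f i j) i) (fin_le_ciSup (fun j => ⨆ i, f i j) j)
  · exact (fin_ciSup_le_iff _ _).2 fun j => (fin_ciSup_le_iff _ _).2 fun i =>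
      le_trans (fin_le_ciSup (fun j => f i j) j) (fin_le_ciSup (fun i => ⨆ j, f i j) i)

lemma fin_tendsto_ciSup {f : ℕ → ι → ℝ} {g : ι → ℝ}
    (h : ∀ i, Filter.Tendsto (fun n => f n i) Filter.atTop (nhds (g i))) :
    Filter.Tendsto (fun n => ⨆ i, f n i) Filter.atTop (nhds (⨆ i, g i)) := by
  have h1 : Filter.Tendsto (fun n => (fun i => f n i)) Filter.atTop (nhds g) :=
    tendsto_pi_nhds.2 h
  exact (contSup.tendsto g).comp h1

lemma fin_abs_ciSup_le_sum (f : ι → ℝ) : |⨆ i, f i| ≤ ∑ i, |f i| := by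
  rw [abs_le]
  constructor
  · refine le_trans ?_ (fin_le_ciSup f (Classical.arbitrary ι))
    refine le_trans ?_ (neg_abs_le _)
    simp only [neg_le_neg_iff]
    exact Finset.single_le_sum (fun i _ => abs_nonneg (f i)) (Finset.mem_univ _)
  · exact (fin_ciSup_le_iff _ _).2 fun i =>
      le_trans (le_abs_self _) (Finset.single_le_sum (fun i _ => abs_nonneg (f i)) (Finset.mem_univ i))

end SupHelpers

noncomputable def eVec (m : ℕ) (i : Fin m) : Fin m → ℝ := Pi.single i 1

section NormHelpers
variable {m : ℕ} (N : (Fin m → ℝ) → ℝ)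
  (hN_tri : ∀ x y, N (x + y) ≤ N x + N y)
  (hN_smul : ∀ (c : ℝ) (x), N (c • x) = |c| * N x)

include hN_smul in
lemma mynorm_zero : N 0 = 0 := by
  have := hN_smul 0 0
  simpa using this

include hN_tri hN_smul in
lemma mynorm_nonneg : ∀ x, 0 ≤ N x := by
  intro x
  have h1 : N 0 ≤ N x + N (-x) := by
    have := hN_tri x (-x); simpa using this
  have h2 : N (-x) = N x := by
    have := hN_smul (-1) x; simpa using this
  have h0 := mynorm_zero N hN_smul
  linarith

include hN_tri hN_smul in
lemma mynorm_sum_le {ι : Type*} (s : Finset ι) (f : ι → (Fin m → ℝ)) :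
    N (∑ i ∈ s, f i) ≤ ∑ i ∈ s, N (f i) := by
  classical
  induction s using Finset.induction_on with
  | empty => simp [mynorm_zero N hN_smul]
  | insert _ _ h ih =>
    rename_i a s
    rw [Finset.sum_insert h, Finset.sum_insert h]
    exact le_trans (hN_tri _ _) (by linarith)

include hN_tri hN_smul in
lemma mynorm_coord_bound (x : Fin m → ℝ) :
    N x ≤ ∑ i, |x i| * N (eVec m i) := by
  have hx : x = ∑ i, (x i) • eVec m i := by
    funext j
    simp [eVec, Finset.sum_apply, Pi.single_apply, mul_comm]
  calc N x = N (∑ i, (x i) • eVec m i) := by rw [← hx]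
    _ ≤ ∑ i, N ((x i) • eVec m i) := mynorm_sum_le N hN_tri hN_smul _ _
    _ = ∑ i, |x i| * N (eVec m i) := by simp_rw [hN_smul]

include hN_tri hN_smul in
lemma mynorm_continuous : Continuous N := by
  rw [continuous_iff_continuousAt]
  intro x
  rw [ContinuousAt, tendsto_iff_dist_tendsto_zero]
  have hbd : ∀ y, dist (N y) (N x) ≤ ∑ i, |y i - x i| * N (eVec m i) := by
    intro y
    rw [Real.dist_eq, abs_le]
    have h1 : N y ≤ N (y - x) + N x := by
      have := hN_tri (y - x) x; simpa using this
    have h2 : N x ≤ N (y - x) + N y := by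
      have := hN_tri (x - y) y
      have hsym : N (x - y) = N (y - x) := by
        have := hN_smul (-1) (y - x); simpa [neg_sub] using this
      simp only [sub_add_cancel] at this
      linarith [hsym ▸ this]
    have hb := mynorm_coord_bound N hN_tri hN_smul (y - x)
    simp only [Pi.sub_apply] at hb
    constructor <;> linarith
  have hcont : Filter.Tendsto (fun y => ∑ i, |y i - x i| * N (eVec m i))
      (nhds x) (nhds 0) := by
    have hc : Continuous (fun y : Fin m → ℝ => ∑ i, |y i - x i| * N (eVec m i)) := by
      continuity
    have h0 : (fun y : Fin m → ℝ => ∑ i, |y i - x i| * N (eVec m i)) x = 0 := by simp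
    simpa [h0] using hc.tendsto x
  exact squeeze_zero (fun y => dist_nonneg) hbd hcont

end NormHelpers


/-- Lemma S1 of the paper: if `μ` is max-stable with non-degenerate 1-Fréchet margins and
spectral measure `S` (on the positive unit sphere of a norm `N` on `ℝ^d`), and
`H ∈ [0,∞)^{p×d}`, then the transformed measure `S̃` is a finite Borel measure concentrated
on the positive unit sphere of the norm `N'` on `ℝ^p`, and the pushforward of `μ` under
`x ↦ H ⋄ x` is max-stable with 1-Fréchet margins and spectral measure `S̃`. -/
theorem maxlinear_pushforward_maxstable
    {d p : ℕ} (hd : 0 < d) (hp : 0 < p)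
    (N : (Fin d → ℝ) → ℝ)
    (hN_tri : ∀ x y, N (x + y) ≤ N x + N y)
    (hN_smul : ∀ (c : ℝ) (x), N (c • x) = |c| * N x)
    (hN_def : ∀ x, N x = 0 → x = 0)
    (N' : (Fin p → ℝ) → ℝ)
    (hN'_tri : ∀ x y, N' (x + y) ≤ N' x + N' y)
    (hN'_smul : ∀ (c : ℝ) (x), N' (c • x) = |c| * N' x)
    (hN'_def : ∀ x, N' x = 0 → x = 0)
    (S : Measure (Fin d → ℝ)) [IsFiniteMeasure S]
    (hS_sphere : S {a | ¬ ((∀ i, 0 ≤ a i) ∧ N a = 1)} = 0)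
    (hS_pos : ∀ j, 0 < ∫ a, a j ∂S)
    (μ : Measure (Fin d → ℝ)) [IsProbabilityMeasure μ]
    (hμ_orthant : μ {x | ¬ ∀ i, 0 ≤ x i} = 0)
    (hμ_cdf : ∀ z : Fin d → ℝ, (∀ i, 0 < z i) →
      μ {x | ∀ i, x i ≤ z i} =
        ENNReal.ofReal (Real.exp (-∫ a, ⨆ i, a i / z i ∂S)))
    (H : Fin p → Fin d → ℝ) (hH : ∀ i j, 0 ≤ H i j) :
    IsFiniteMeasure (transformedSpectralMeasure N' S H) ∧
    (transformedSpectralMeasure N' S H) {y | ¬ ((∀ i, 0 ≤ y i) ∧ N' y = 1)} = 0 ∧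
    ∀ z : Fin p → ℝ, (∀ i, 0 < z i) →
      (μ.map (maxVec H)) {y | ∀ i, y i ≤ z i} =
        ENNReal.ofReal
          (Real.exp (-∫ a, ⨆ i, a i / z i ∂(transformedSpectralMeasure N' S H))) := by
  haveI : Nonempty (Fin d) := ⟨⟨0, hd⟩⟩
  haveI : Nonempty (Fin p) := ⟨⟨0, hp⟩⟩
  -- continuity / measurability infrastructure
  have hv_cont : Continuous (maxVec H) := by
    apply continuous_pi; intro i
    exact contSup.comp (continuous_pi fun l => continuous_const.mul (continuous_apply l))
  have hN'_cont : Continuous N' := mynorm_continuous N' hN'_tri hN'_smul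
  have hN'_nonneg := mynorm_nonneg N' hN'_tri hN'_smul
  have hNv_cont : Continuous (fun a => N' (maxVec H a)) := hN'_cont.comp hv_cont
  have hUopen : IsOpen {a : Fin d → ℝ | 0 < N' (maxVec H a)} :=
    isOpen_lt continuous_const hNv_cont
  have hU : MeasurableSet {a : Fin d → ℝ | 0 < N' (maxVec H a)} := hUopen.measurableSet
  have hT : Measurable (fun a => (N' (maxVec H a))⁻¹ • maxVec H a) :=
    (hNv_cont.measurable.inv).smul hv_cont.measurable
  have hS_int : ∀ j, Integrable (fun a => a j) S := by
    intro j
    by_contra h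
    have := hS_pos j
    rw [integral_undef h] at this
    exact lt_irrefl 0 this
  have hS_ae : ∀ᵐ a ∂S, (∀ i, 0 ≤ a i) ∧ N a = 1 := ae_iff.mpr hS_sphere
  have hμ_ae : ∀ᵐ x ∂μ, ∀ i, 0 ≤ x i := ae_iff.mpr hμ_orthant
  have hv_nonneg : ∀ (a : Fin d → ℝ), (∀ l, 0 ≤ a l) → ∀ i, 0 ≤ maxVec H a i := by
    intro a ha i
    exact fin_ciSup_nonneg _ (fun l => mul_nonneg (hH i l) (ha l))
  -- measure formula for the transformed measure
  have hSmap : ∀ A : Set (Fin p → ℝ), MeasurableSet A →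
      transformedSpectralMeasure N' S H A
        = ∫⁻ a in ((fun a => (N' (maxVec H a))⁻¹ • maxVec H a) ⁻¹' A)
            ∩ {a | 0 < N' (maxVec H a)},
            ENNReal.ofReal (N' (maxVec H a)) ∂S := by
    intro A hA
    rw [transformedSpectralMeasure, Measure.map_apply hT hA,
      withDensity_apply _ (hT hA), Measure.restrict_restrict (hT hA)]
  -- Part 1: finiteness
  have part1 : IsFiniteMeasure (transformedSpectralMeasure N' S H) := by
    constructor
    rw [hSmap Set.univ MeasurableSet.univ]
    have hg_int : Integrable (fun a => ∑ i, (∑ l, H i l * |a l|) * N' (eVec p i)) S := by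
      apply integrable_finset_sum
      intro i _
      have : Integrable (fun a => ∑ l, H i l * |a l|) S := by
        apply integrable_finset_sum
        intro l _
        exact ((hS_int l).abs.const_mul (H i l))
      exact this.mul_const _
    have hbound : ∀ a, N' (maxVec H a) ≤ ∑ i, (∑ l, H i l * |a l|) * N' (eVec p i) := by
      intro a
      refine le_trans (mynorm_coord_bound N' hN'_tri hN'_smul _) ?_
      apply Finset.sum_le_sum
      intro i _
      apply mul_le_mul_of_nonneg_right _ (hN'_nonneg _)
      refine le_trans (fin_abs_ciSup_le_sum _) ?_
      apply Finset.sum_le_sum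
      intro l _
      rw [abs_mul, abs_of_nonneg (hH i l)]
    calc ∫⁻ a in _, ENNReal.ofReal (N' (maxVec H a)) ∂S
        ≤ ∫⁻ a, ENNReal.ofReal (N' (maxVec H a)) ∂S := setLIntegral_le_lintegral _ _
      _ ≤ ∫⁻ a, ENNReal.ofReal (∑ i, (∑ l, H i l * |a l|) * N' (eVec p i)) ∂S :=
          lintegral_mono fun a => ENNReal.ofReal_le_ofReal (hbound a)
      _ < ⊤ := hg_int.lintegral_lt_top
  refine ⟨part1, ?_, ?_⟩
  -- Part 2: concentration on the positive unit sphere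
  · have hbad : MeasurableSet {y : Fin p → ℝ | ¬ ((∀ i, 0 ≤ y i) ∧ N' y = 1)} := by
      apply MeasurableSet.compl
      refine MeasurableSet.inter ?_ ?_
      · show MeasurableSet {y : Fin p → ℝ | ∀ i, 0 ≤ y i}
        have : {y : Fin p → ℝ | ∀ i, 0 ≤ y i} = ⋂ i, {y | 0 ≤ y i} := by
          ext y; simp
        rw [this]
        exact MeasurableSet.iInter fun i =>
          measurableSet_le measurable_const (measurable_pi_apply i)
      · exact hN'_cont.measurable (measurableSet_singleton 1)
    rw [hSmap _ hbad]
    apply setLIntegral_measure_zero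
    apply measure_mono_null _ hS_sphere
    intro a ha
    simp only [Set.mem_inter_iff, Set.mem_preimage, Set.mem_setOf_eq] at ha ⊢
    obtain ⟨hmem, hpos⟩ := ha
    intro hgood
    apply hmem
    constructor
    · intro i
      simp only [Pi.smul_apply, smul_eq_mul]
      exact mul_nonneg (inv_nonneg.2 (le_of_lt hpos)) (hv_nonneg a hgood.1 i)
    · rw [hN'_smul]
      rw [abs_of_nonneg (inv_nonneg.2 (le_of_lt hpos))]
      exact inv_mul_cancel₀ (ne_of_gt hpos)
  -- Part 3: the CDF of the pushforward
  · intro z hz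
    set c : Fin d → ℝ := fun l => ⨆ i, H i l / z i with hc_def
    have hc_nonneg : ∀ l, 0 ≤ c l := fun l =>
      fin_ciSup_nonneg _ (fun i => div_nonneg (hH i l) (hz i).le)
    set z' : ℕ → Fin d → ℝ := fun n l => if c l = 0 then (n:ℝ)+1 else (c l)⁻¹ with hz'_def
    have hz'_pos : ∀ n l, 0 < z' n l := by
      intro n l
      simp only [hz'_def]
      split_ifs with h
      · positivity
      · exact inv_pos.2 (lt_of_le_of_ne (hc_nonneg l) (Ne.symm h))
    have hz'_inv : ∀ n l, (z' n l)⁻¹ = if c l = 0 then ((n:ℝ)+1)⁻¹ else c l := by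
      intro n l
      simp only [hz'_def]
      split_ifs with h
      · rfl
      · exact inv_inv _
    -- the increasing family of sets
    set A : ℕ → Set (Fin d → ℝ) := fun n => {x | ∀ l, x l ≤ z' n l} with hA_def
    have hA_mono : Monotone A := by
      apply monotone_nat_of_le_succ
      intro n x hx l
      refine le_trans (hx l) ?_
      simp only [hz'_def]
      split_ifs
      · push_cast; linarith
      · exact le_rfl
    have hA_union : ⋃ n, A n = {x | ∀ l, c l * x l ≤ 1} := by
      ext x
      simp only [Set.mem_iUnion, hA_def, Set.mem_setOf_eq]
      constructor
      · rintro ⟨n, hn⟩ l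
        by_cases h : c l = 0
        · simp [h]
        · have hcl : 0 < c l := lt_of_le_of_ne (hc_nonneg l) (Ne.symm h)
          have := hn l
          simp only [hz'_def, if_neg h] at this
          calc c l * x l ≤ c l * (c l)⁻¹ := mul_le_mul_of_nonneg_left this hcl.le
            _ = 1 := mul_inv_cancel₀ (ne_of_gt hcl)
      · intro hx
        obtain ⟨n, hn⟩ := exists_nat_ge (⨆ l, x l)
        refine ⟨n, fun l => ?_⟩
        simp only [hz'_def]
        split_ifs with h
        · refine le_trans (fin_le_ciSup (fun l => x l) l) (le_trans hn (by linarith))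
        · have hcl : 0 < c l := lt_of_le_of_ne (hc_nonneg l) (Ne.symm h)
          have := hx l
          calc x l = (c l)⁻¹ * (c l * x l) := by field_simp
            _ ≤ (c l)⁻¹ * 1 := mul_le_mul_of_nonneg_left this (inv_nonneg.2 hcl.le)
            _ = (c l)⁻¹ := mul_one _
    -- convergence of the integrals
    have hI_tendsto : Filter.Tendsto (fun n => ∫ a, ⨆ l, a l / z' n l ∂S)
        Filter.atTop (nhds (∫ a, ⨆ l, c l * a l ∂S)) := by
      apply tendsto_integral_of_dominated_convergence
        (bound := fun a => ∑ l, (c l + 1) * |a l|)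
      · intro n
        apply Continuous.aestronglyMeasurable
        exact contSup.comp (continuous_pi fun l => (continuous_apply l).div_const _)
      · apply integrable_finset_sum
        intro l _
        exact ((hS_int l).abs.const_mul _)
      · intro n
        apply Filter.Eventually.of_forall
        intro a
        rw [Real.norm_eq_abs]
        refine le_trans (fin_abs_ciSup_le_sum _) ?_
        apply Finset.sum_le_sum
        intro l _
        rw [abs_div, abs_of_pos (hz'_pos n l), div_eq_mul_inv, mul_comm]
        apply mul_le_mul_of_nonneg_right _ (abs_nonneg _)
        rw [hz'_inv]
        split_ifs with h
        · rw [h]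
          refine le_trans ?_ (by linarith : (1:ℝ) ≤ 0 + 1)
          rw [inv_le_one_iff₀]
          right; push_cast; linarith
        · linarith
      · apply Filter.Eventually.of_forall
        intro a
        apply fin_tendsto_ciSup
        intro l
        by_cases h : c l = 0
        · have : (fun n : ℕ => a l / z' n l) = fun n : ℕ => a l * (1/((n:ℝ)+1)) := by
            funext n
            simp [hz'_def, if_pos h, div_eq_mul_inv, one_div]
          rw [this, h, zero_mul]
          simpa using tendsto_one_div_add_atTop_nhds_zero_nat.const_mul (a l)
        · have : (fun n : ℕ => a l / z' n l) = fun _ => c l * a l := by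
            funext n
            simp only [hz'_def, if_neg h]
            rw [div_inv_eq_mul, mul_comm]
          rw [this]
          exact tendsto_const_nhds
    -- measure of the union via limits
    have hcdf_seq : ∀ n, μ (A n) = ENNReal.ofReal (Real.exp (-∫ a, ⨆ l, a l / z' n l ∂S)) :=
      fun n => hμ_cdf (z' n) (hz'_pos n)
    have htend_meas : Filter.Tendsto (fun n => μ (A n)) Filter.atTop (nhds (μ (⋃ n, A n))) :=
      tendsto_measure_iUnion_atTop hA_mono
    have htend_rhs : Filter.Tendsto (fun n => μ (A n)) Filter.atTop
        (nhds (ENNReal.ofReal (Real.exp (-∫ a, ⨆ l, c l * a l ∂S)))) := by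
      simp_rw [hcdf_seq]
      exact (ENNReal.continuous_ofReal.tendsto _).comp
        ((Real.continuous_exp.tendsto _).comp hI_tendsto.neg)
    have hB : μ {x | ∀ l, c l * x l ≤ 1}
        = ENNReal.ofReal (Real.exp (-∫ a, ⨆ l, c l * a l ∂S)) := by
      rw [← hA_union]
      exact tendsto_nhds_unique htend_meas htend_rhs
    -- reduce the pushforward measure to μ of a max-linear set
    have hsetz : MeasurableSet {y : Fin p → ℝ | ∀ i, y i ≤ z i} := by
      have : {y : Fin p → ℝ | ∀ i, y i ≤ z i} = ⋂ i, {y | y i ≤ z i} := by ext y; simp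
      rw [this]
      exact MeasurableSet.iInter fun i =>
        measurableSet_le (measurable_pi_apply i) measurable_const
    have hmap : (μ.map (maxVec H)) {y | ∀ i, y i ≤ z i}
        = μ {x | ∀ i, maxVec H x i ≤ z i} := by
      rw [Measure.map_apply hv_cont.measurable hsetz]
      rfl
    have hclaimA : μ {x | ∀ i, maxVec H x i ≤ z i} = μ {x | ∀ l, c l * x l ≤ 1} := by
      apply measure_congr
      rw [Filter.eventuallyEq_set]
      filter_upwards [hμ_ae] with x hx
      show (∀ i, maxVec H x i ≤ z i) ↔ (∀ l, c l * x l ≤ 1)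
      constructor
      · intro h l
        have h1 : c l * x l = ⨆ i, x l * (H i l / z i) := by
          rw [mul_comm]
          simp only [hc_def]
          exact Real.mul_iSup_of_nonneg (hx l) _
        rw [h1, fin_ciSup_le_iff]
        intro i
        have h2 : H i l * x l ≤ z i := le_trans (fin_le_ciSup (fun l => H i l * x l) l) (h i)
        have h3 : x l * (H i l / z i) = (H i l * x l) / z i := by ring
        rw [h3, div_le_one (hz i)]
        exact h2
      · intro h i
        rw [show maxVec H x i = ⨆ l, H i l * x l from rfl, fin_ciSup_le_iff]
        intro l
        have h2 : H i l / z i ≤ c l := by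
          simp only [hc_def]
          exact fin_le_ciSup (fun i => H i l / z i) i
        have h4 : (H i l / z i) * x l ≤ 1 :=
          le_trans (mul_le_mul_of_nonneg_right h2 (hx l)) (h l)
        have h5 : (H i l / z i) * x l = (H i l * x l) / z i := by ring
        rw [h5, div_le_one (hz i)] at h4
        exact h4
    -- the integral with respect to the transformed spectral measure
    have hfz_cont : Continuous (fun y : Fin p → ℝ => ⨆ i, y i / z i) :=
      contSup.comp (continuous_pi fun i => (continuous_apply i).div_const _)
    have hclaimC : ∫ y, (⨆ i, y i / z i) ∂(transformedSpectralMeasure N' S H)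
        = ∫ a, ⨆ l, c l * a l ∂S := by
      rw [transformedSpectralMeasure,
        integral_map hT.aemeasurable hfz_cont.aestronglyMeasurable]
      have hρ : (fun a => ENNReal.ofReal (N' (maxVec H a)))
          = fun a => (((fun a => (N' (maxVec H a)).toNNReal) a : ℝ≥0) : ℝ≥0∞) := rfl
      rw [hρ, integral_withDensity_eq_integral_smul
        (f := fun a => (N' (maxVec H a)).toNNReal) hNv_cont.measurable.real_toNNReal _]
      rw [← integral_indicator hU]
      have hpt : ∀ a, Set.indicator {a : Fin d → ℝ | 0 < N' (maxVec H a)}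
          (fun a => (N' (maxVec H a)).toNNReal •
            (⨆ i, ((N' (maxVec H a))⁻¹ • maxVec H a) i / z i)) a
          = ⨆ i, maxVec H a i / z i := by
        intro a
        by_cases hmem : a ∈ {a : Fin d → ℝ | 0 < N' (maxVec H a)}
        · rw [Set.indicator_of_mem hmem]
          have hc0 : 0 < N' (maxVec H a) := hmem
          have h1 : ∀ i, ((N' (maxVec H a))⁻¹ • maxVec H a) i / z i
              = (N' (maxVec H a))⁻¹ * (maxVec H a i / z i) := by
            intro i
            simp [Pi.smul_apply, smul_eq_mul, mul_div_assoc]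
          simp_rw [h1]
          rw [← Real.mul_iSup_of_nonneg (inv_nonneg.2 hc0.le)]
          rw [NNReal.smul_def, smul_eq_mul, Real.coe_toNNReal _ hc0.le,
            ← mul_assoc, mul_inv_cancel₀ (ne_of_gt hc0), one_mul]
        · rw [Set.indicator_of_notMem hmem]
          have h0 : N' (maxVec H a) = 0 :=
            le_antisymm (not_lt.1 hmem) (hN'_nonneg _)
          have hv0 : maxVec H a = 0 := hN'_def _ h0
          rw [hv0]
          simp [ciSup_const]
      rw [integral_congr_ae (Filter.Eventually.of_forall hpt)]
      apply integral_congr_ae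
      filter_upwards [hS_ae] with a ha
      obtain ⟨ha0, -⟩ := ha
      have step1 : ∀ i, maxVec H a i / z i = ⨆ l, (H i l * a l) / z i := by
        intro i
        rw [show maxVec H a i = ⨆ l, H i l * a l from rfl, div_eq_inv_mul,
          Real.mul_iSup_of_nonneg (inv_nonneg.2 (hz i).le)]
        congr 1
        funext l
        rw [← div_eq_inv_mul]
      simp_rw [step1]
      rw [fin_ciSup_comm]
      congr 1
      funext l
      have step2 : ∀ i, (H i l * a l) / z i = a l * (H i l / z i) := fun i => by ring
      simp_rw [step2]
      rw [← Real.mul_iSup_of_nonneg (ha0 l), mul_comm]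
    rw [hmap, hclaimA, hB, ← hclaimC]
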